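/- Let n ≥ 2 be an integer. Every complex root α of the polynomial f_{1,n}(X) satisfies 1 ≤ |α| < (n+1)^{2/n}. -/

import Mathlib

open Polynomial

/-- `f1 n = X^(n-1) + 2 X^(n-2) + ⋯ + (n-1) X + n = Σ_{k=1}^n k · X^(n-k)` over `ℤ`. -/
noncomputable def f1 (n : ℕ) : Polynomial ℤ :=
  ∑ k ∈ Finset.Icc 1 n, C (k : ℤ) * X ^ (n - k)

lemma key2 (α : ℂ) : ∀ n : ℕ,
    (α - 1) * ∑ j ∈ Finset.Icc 1 n, α ^ j = α ^ (n + 1) - α := by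
  intro n
  induction n with
  | zero => simp
  | succ n ih =>
    rw [Finset.sum_Icc_succ_top (by omega : 1 ≤ n + 1), mul_add, ih]
    ring

lemma key1 (α : ℂ) : ∀ n : ℕ,
    (α - 1) * ∑ k ∈ Finset.Icc 1 n, (k : ℂ) * α ^ (n - k)
      = (∑ j ∈ Finset.Icc 1 n, α ^ j) - n := by
  intro n
  induction n with
  | zero => simp
  | succ n ih =>
    have hstep : ∑ k ∈ Finset.Icc 1 (n + 1), (k : ℂ) * α ^ (n + 1 - k)
        = α * (∑ k ∈ Finset.Icc 1 n, (k : ℂ) * α ^ (n - k)) + (n + 1) := by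
      rw [Finset.sum_Icc_succ_top (by omega : 1 ≤ n + 1)]
      have h : ∑ k ∈ Finset.Icc 1 n, (k : ℂ) * α ^ (n + 1 - k)
          = ∑ k ∈ Finset.Icc 1 n, α * ((k : ℂ) * α ^ (n - k)) := by
        refine Finset.sum_congr rfl fun k hk => ?_
        have hk' := (Finset.mem_Icc.mp hk).2
        rw [show n + 1 - k = (n - k) + 1 by omega, pow_succ]
        ring
      rw [h, ← Finset.mul_sum]
      simp
    have hsum : ∑ j ∈ Finset.Icc 1 (n + 1), α ^ j
        = (∑ j ∈ Finset.Icc 1 n, α ^ j) + α ^ (n + 1) := by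
      rw [Finset.sum_Icc_succ_top (by omega : 1 ≤ n + 1)]
    rw [hstep, hsum]
    push_cast
    linear_combination α * ih + key2 α n

/-- Every complex root `α` of `f1 n` (for `n ≥ 2`) satisfies `1 ≤ |α| < (n+1)^(2/n)`. -/
theorem stmt0 (n : ℕ) (hn : 2 ≤ n) (α : ℂ) (hα : Polynomial.aeval α (f1 n) = 0) :
    1 ≤ ‖α‖ ∧ ‖α‖ < ((n : ℝ) + 1) ^ ((2 : ℝ) / n) := by
  set r := ‖α‖ with hr
  have hev : (∑ k ∈ Finset.Icc 1 n, (k : ℂ) * α ^ (n - k)) = 0 := by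
    rw [← hα]; simp [f1]
  -- the sum Σ_{j=1}^n α^j = n
  have hk1 := key1 α n
  rw [hev, mul_zero] at hk1
  have hsum : (∑ j ∈ Finset.Icc 1 n, α ^ j) = (n : ℂ) := by linear_combination -hk1
  -- α^(n+1) = (n+1)α - n
  have hk2 := key2 α n
  rw [hsum] at hk2
  have hpow : α ^ (n + 1) = ((n : ℂ) + 1) * α - n := by linear_combination -hk2
  -- lower bound
  have h1 : 1 ≤ r := by
    by_contra h
    push_neg at h
    have habs : (n : ℝ) = ‖∑ j ∈ Finset.Icc 1 n, α ^ j‖ := by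
      rw [hsum, Complex.norm_natCast]
    have hle : ‖∑ j ∈ Finset.Icc 1 n, α ^ j‖
        ≤ ∑ j ∈ Finset.Icc 1 n, r ^ j := by
      refine le_trans (norm_sum_le _ _) (le_of_eq ?_)
      exact Finset.sum_congr rfl fun j _ => norm_pow _ _
    have hlt : ∑ j ∈ Finset.Icc 1 n, r ^ j < ∑ j ∈ Finset.Icc 1 n, (1 : ℝ) := by
      refine Finset.sum_lt_sum_of_nonempty ⟨1, Finset.mem_Icc.mpr ⟨le_refl 1, by omega⟩⟩ ?_
      intro j hj
      exact pow_lt_one₀ (norm_nonneg α) h (by have := (Finset.mem_Icc.mp hj).1; omega)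
    have hone : ∑ j ∈ Finset.Icc 1 n, (1 : ℝ) = n := by
      rw [Finset.sum_const, Nat.card_Icc]
      simp
    rw [hone] at hlt
    linarith
  have hrpos : 0 < r := lt_of_lt_of_le one_pos h1
  -- upper bound : r^n ≤ 2n+1
  have hub : r ^ (n + 1) ≤ ((n : ℝ) + 1) * r + n := by
    have h2 := congrArg Norm.norm hpow
    rw [norm_pow] at h2
    have habs : ‖(n : ℂ) + 1‖ = (n : ℝ) + 1 := by
      rw [show ((n : ℂ) + 1) = ((n + 1 : ℕ) : ℂ) by push_cast; ring, Complex.norm_natCast]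
      push_cast; ring
    calc r ^ (n + 1) = ‖((n : ℂ) + 1) * α - n‖ := h2
      _ ≤ ‖((n : ℂ) + 1) * α‖ + ‖(n : ℂ)‖ := by
          simpa [sub_eq_add_neg, norm_neg] using
            norm_add_le (((n : ℂ) + 1) * α) (-(n : ℂ))
      _ = ((n : ℝ) + 1) * r + n := by rw [norm_mul, habs, Complex.norm_natCast]
  have hps : r ^ (n + 1) = r ^ n * r := pow_succ r n
  have hrn : r ^ n ≤ 2 * (n : ℝ) + 1 := by
    have hn' : (n : ℝ) ≤ (n : ℝ) * r := by nlinarith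
    have h3 : r ^ n * r ≤ (2 * (n : ℝ) + 1) * r := by nlinarith
    exact le_of_mul_le_mul_right h3 hrpos
  refine ⟨h1, ?_⟩
  set c := ((n : ℝ) + 1) ^ ((2 : ℝ) / n) with hc
  have hnpos : (0 : ℝ) < n := by positivity
  have hcpow : c ^ n = ((n : ℝ) + 1) ^ 2 := by
    rw [hc, ← Real.rpow_natCast (((n : ℝ) + 1) ^ ((2 : ℝ) / n)) n,
      ← Real.rpow_mul (by positivity), div_mul_cancel₀ _ (ne_of_gt hnpos),
      show ((2 : ℝ)) = ((2 : ℕ) : ℝ) by norm_num, Real.rpow_natCast]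
  have hlt2 : r ^ n < c ^ n := by
    rw [hcpow]
    have : (2 : ℝ) ≤ (n : ℝ) := by exact_mod_cast hn
    nlinarith
  by_contra hcon
  push_neg at hcon
  exact absurd (pow_le_pow_left₀ (by positivity) hcon n) (not_lt.mpr · hlt2)
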